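/- Let X be a Banach lattice in which every norm bounded order closed convex set is |σ|(X, X_n^~)-sequentially closed (property P4). Then X has the disjoint order continuity property: every norm bounded disjoint sequence (f_n) in X₊ with f_n → 0 in σ(X, X_n^~) converges weakly to 0. -/

import Mathlib

open Filter Topology Pointwise

noncomputable section

/-- A directed index type for nets. -/
structure DirectedType : Type 1 where
  ι : Type
  r : ι → ι → Prop
  nonempty : Nonempty ι
  refl : ∀ a, r a a
  trans : ∀ a b c, r a b → r b c → r a c
  directed : ∀ a b, ∃ c, r a c ∧ r b c

/-- The natural numbers as a directed type (for sequences). -/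
def natDir : DirectedType where
  ι := ℕ
  r := (· ≤ ·)
  nonempty := ⟨0⟩
  refl := fun _ => le_refl _
  trans := fun _ _ _ => le_trans
  directed := fun a b => ⟨max a b, le_max_left _ _, le_max_right _ _⟩

/-- A real valued net tends to zero. -/
def NetTendstoZero (D : DirectedType) (u : D.ι → ℝ) : Prop :=
  ∀ ε : ℝ, 0 < ε → ∃ i₀, ∀ i, D.r i₀ i → |u i| < ε

variable {X : Type*} [NormedAddCommGroup X] [Lattice X] [HasSolidNorm X] [IsOrderedAddMonoid X] [NormedSpace ℝ X]

/-- Order convergence of a net: there is a decreasing net `h` with infimum `0`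
dominating `|f i - x|` eventually. -/
def OrderConvNet (D : DirectedType) (f : D.ι → X) (x : X) : Prop :=
  ∃ (E : DirectedType) (h : E.ι → X),
    (∀ γ₁ γ₂, E.r γ₁ γ₂ → h γ₂ ≤ h γ₁) ∧ IsGLB (Set.range h) 0 ∧
      ∀ γ, ∃ i₀, ∀ i, D.r i₀ i → |f i - x| ≤ h γ

/-- The order closure of a set: all limits of order convergent nets from the set. -/
def OrderClosure (C : Set X) : Set X :=
  {x | ∃ (D : DirectedType) (f : D.ι → X), (∀ i, f i ∈ C) ∧ OrderConvNet D f x}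

/-- A set is order closed if it contains all order limits of nets from it. -/
def IsOrderClosed (C : Set X) : Prop := OrderClosure C ⊆ C

/-- Unbounded order convergence of a net. -/
def UOConvNet (D : DirectedType) (f : D.ι → X) (x : X) : Prop :=
  ∀ h : X, 0 ≤ h → OrderConvNet D (fun i => |f i - x| ⊓ h) 0

/-- Membership in the order continuous dual `X_n^~`. -/
def InOCDual (g : X →L[ℝ] ℝ) : Prop :=
  ∀ (D : DirectedType) (f : D.ι → X), OrderConvNet D f 0 →
    NetTendstoZero D fun i => g (f i)

/-- Membership in the unbounded order continuous dual `X_uo^~`. -/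
def InUODual (g : X →L[ℝ] ℝ) : Prop :=
  ∀ (D : DirectedType) (f : D.ι → X), (∃ M, ∀ i, ‖f i‖ ≤ M) → UOConvNet D f 0 →
    NetTendstoZero D fun i => g (f i)

/-- Convergence of a net in the topology `σ(X, X_n^~)`. -/
def SigmaNConvNet (D : DirectedType) (f : D.ι → X) (x : X) : Prop :=
  ∀ g : X →L[ℝ] ℝ, InOCDual g → NetTendstoZero D fun i => g (f i) - g x

/-- Convergence of a net in the topology `σ(X, X_uo^~)`. -/
def SigmaUOConvNet (D : DirectedType) (f : D.ι → X) (x : X) : Prop :=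
  ∀ g : X →L[ℝ] ℝ, InUODual g → NetTendstoZero D fun i => g (f i) - g x

/-- A set is `σ(X, X_n^~)`-closed. -/
def IsSigmaNClosed (C : Set X) : Prop :=
  ∀ (D : DirectedType) (f : D.ι → X), (∀ i, f i ∈ C) →
    ∀ x, SigmaNConvNet D f x → x ∈ C

/-- A set is `σ(X, X_uo^~)`-closed. -/
def IsSigmaUOClosed (C : Set X) : Prop :=
  ∀ (D : DirectedType) (f : D.ι → X), (∀ i, f i ∈ C) →
    ∀ x, SigmaUOConvNet D f x → x ∈ C

/-- The `σ(X, X_n^~)`-closure of a set. -/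
def SigmaNClosure (C : Set X) : Set X :=
  {x | ∃ (D : DirectedType) (f : D.ι → X), (∀ i, f i ∈ C) ∧ SigmaNConvNet D f x}

/-- The `|σ|(X, X_n^~)`-sequential closure of a set. -/
def AbsSigmaSeqClosure (C : Set X) : Set X :=
  {x | ∃ s : ℕ → X, (∀ n, s n ∈ C) ∧
    ∀ g : X →L[ℝ] ℝ, InOCDual g → Tendsto (fun n => g (|s n - x|)) atTop (𝓝 0)}

/-- A set is `|σ|(X, X_n^~)`-sequentially closed. -/
def IsAbsSigmaSeqClosed (C : Set X) : Prop := AbsSigmaSeqClosure C ⊆ C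

/-- The order on the dual: `g ≤ h` iff `g x ≤ h x` on the positive cone. -/
def dualLE (g h : X →L[ℝ] ℝ) : Prop := ∀ x : X, 0 ≤ x → g x ≤ h x

/-- Order continuity of the norm on a subset `S` of the dual: every net in `S`
decreasing to `0` (infimum `0` among lower bounds from `S`) converges to `0` in
the operator norm. -/
def DualOCOn (S : Set (X →L[ℝ] ℝ)) : Prop :=
  ∀ (D : DirectedType) (f : D.ι → (X →L[ℝ] ℝ)), (∀ i, f i ∈ S) →
    (∀ i j, D.r i j → dualLE (f j) (f i)) → (∀ i, dualLE 0 (f i)) →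
    (∀ h ∈ S, (∀ i, dualLE h (f i)) → dualLE h 0) →
    NetTendstoZero D fun i => ‖f i‖

/-- A sequence is weakly null. -/
def WeaklyNull (f : ℕ → X) : Prop :=
  ∀ g : X →L[ℝ] ℝ, Tendsto (fun n => g (f n)) atTop (𝓝 0)

/-- The sequence satisfies a lower `ℓ¹`-estimate, i.e. it is equivalent to the
unit vector basis of `ℓ¹`. -/
def IsL1Basic (f : ℕ → X) : Prop :=
  ∃ M : ℝ, 0 < M ∧ ∀ (m : ℕ) (a : ℕ → ℝ),
    (1 / M) * ∑ k ∈ Finset.range m, |a k| ≤ ‖∑ k ∈ Finset.range m, a k • f k‖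

variable (X)

/-- Order continuity of the norm of `X`. -/
def OCNorm : Prop :=
  ∀ (D : DirectedType) (f : D.ι → X), (∀ i j, D.r i j → f j ≤ f i) →
    IsGLB (Set.range f) 0 → NetTendstoZero D fun i => ‖f i‖

/-- The order continuous dual as a set of continuous linear functionals. -/
def OCDual : Set (X →L[ℝ] ℝ) := {g | InOCDual g}

/-- The norm dual `X*` is order continuous. -/
def DualOrderContinuous : Prop := DualOCOn (Set.univ : Set (X →L[ℝ] ℝ))

/-- The order continuous dual `X_n^~` is order continuous. -/
def OCDualOrderContinuous : Prop := DualOCOn (OCDual X)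

/-- `X` is monotonically complete. -/
def MonotonicallyComplete : Prop :=
  ∀ (D : DirectedType) (f : D.ι → X), (∀ i j, D.r i j → f i ≤ f j) →
    (∃ M, ∀ i, ‖f i‖ ≤ M) → ∃ s, IsLUB (Set.range f) s

/-- `X` is Dedekind complete. -/
def DedekindComplete : Prop :=
  ∀ S : Set X, S.Nonempty → BddAbove S → ∃ s, IsLUB S s

/-- `X` is σ-Dedekind complete. -/
def SigmaDedekindComplete : Prop :=
  ∀ f : ℕ → X, BddAbove (Set.range f) → ∃ s, IsLUB (Set.range f) s

/-- `X` has the weak Fatou property. -/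
def WeakFatou : Prop :=
  ∃ r : ℝ, 0 < r ∧ ∀ (D : DirectedType) (f : D.ι → X),
    (∀ i j, D.r i j → f i ≤ f j) → ∀ s, IsLUB (Set.range f) s →
    ∀ M : ℝ, (∀ i, ‖f i‖ ≤ M) → ‖s‖ ≤ r * M

/-- `X_n^~` separates the points of `X`. -/
def OCDualSeparatesPoints : Prop :=
  ∀ x : X, x ≠ 0 → ∃ g : X →L[ℝ] ℝ, InOCDual g ∧ g x ≠ 0

/-- `X_n^~` contains a strictly positive element. -/
def HasStrictlyPositiveOCFunctional : Prop :=
  ∃ g : X →L[ℝ] ℝ, InOCDual g ∧ ∀ x : X, x ≠ 0 → 0 < g (|x|)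

/-- The unit ball `B` determined by `X_n^~`. -/
def KSBall : Set X :=
  {x | ∀ g : X →L[ℝ] ℝ, InOCDual g → dualLE 0 g → ‖g‖ ≤ 1 → g (|x|) ≤ 1}

/-- `σ(X, X_n^~)` has the Krein–Smulian property. -/
def KreinSmulianProperty : Prop :=
  ∀ C : Set X, Convex ℝ C →
    (∀ k : ℕ, IsSigmaNClosed (C ∩ (k : ℝ) • KSBall X)) → IsSigmaNClosed C

/-- Property `P1`: every order closed convex set is `σ(X, X_n^~)`-closed. -/
def PropP1 : Prop := ∀ C : Set X, Convex ℝ C → IsOrderClosed C → IsSigmaNClosed C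

/-- Property `P4`: every norm bounded order closed convex set is
`|σ|(X, X_n^~)`-sequentially closed. -/
def PropP4 : Prop :=
  ∀ C : Set X, Convex ℝ C → (∃ M, ∀ x ∈ C, ‖x‖ ≤ M) → IsOrderClosed C →
    IsAbsSigmaSeqClosed C

/-- The disjoint order continuity property. -/
def DOCP : Prop :=
  ∀ f : ℕ → X, (∀ n, 0 ≤ f n) → (∃ M, ∀ n, ‖f n‖ ≤ M) →
    (∀ n m, n ≠ m → f n ⊓ f m = 0) →
    (∀ g : X →L[ℝ] ℝ, InOCDual g → Tendsto (fun n => g (f n)) atTop (𝓝 0)) →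
    WeaklyNull f

/-- The order continuous part `X_a` of `X`. -/
def OrderContPart : Set X :=
  {f | ∀ (D : DirectedType) (g : D.ι → X), (∀ i, |g i| ≤ |f|) →
    OrderConvNet D g 0 → NetTendstoZero D fun i => ‖g i‖}

/-- The order subsequence splitting property. -/
def OSSP : Prop :=
  ∀ f : ℕ → X, (∀ n, 0 ≤ f n) → (∃ M, ∀ n, ‖f n‖ ≤ M) → UOConvNet natDir f 0 →
    ∃ φ : ℕ → ℕ, StrictMono φ ∧ ∃ x y z : ℕ → X,
      (∀ k, f (φ k) = x k + y k + z k) ∧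
      (∀ k, 0 ≤ x k) ∧ (∀ k, 0 ≤ y k) ∧ (∀ k, 0 ≤ z k) ∧
      (∀ k, x k ∈ OrderContPart X) ∧
      (∀ k l, k ≠ l → y k ⊓ y l = 0) ∧
      (∃ b, ∀ k, z k ≤ b)



section Lat
variable {X : Type*} [NormedAddCommGroup X] [Lattice X] [HasSolidNorm X] [IsOrderedAddMonoid X]

/-- Riesz subadditivity of inf over sums of positive elements. -/
lemma st_inf_add_le (a b c : X) (ha : 0 ≤ a) (hb : 0 ≤ b) (hc : 0 ≤ c) :
    (a + b) ⊓ c ≤ a ⊓ c + b ⊓ c := by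
  have key : (a + b) ⊓ c - a ⊓ c ≤ b ⊓ c := by
    have h1 : (a + b) ⊓ c - a ⊓ c = ((a + b) ⊓ c - a) ⊔ ((a + b) ⊓ c - c) := by
      rw [sub_eq_add_neg, neg_inf, add_sup, sub_eq_add_neg, sub_eq_add_neg]
    rw [h1]
    apply sup_le
    · refine le_inf ?_ ?_
      · rw [sub_le_iff_le_add]; exact inf_le_left.trans (by rw [add_comm])
      · exact (sub_le_sub_right inf_le_right a).trans ((sub_le_self c ha))
    · exact (sub_nonpos.2 inf_le_right).trans (le_inf hb hc)
  calc (a + b) ⊓ c = ((a + b) ⊓ c - a ⊓ c) + a ⊓ c := by abel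
  _ ≤ b ⊓ c + a ⊓ c := add_le_add_left key _
  _ = a ⊓ c + b ⊓ c := add_comm _ _

lemma st_disj_add (a b c : X) (ha : 0 ≤ a) (hb : 0 ≤ b) (hc : 0 ≤ c)
    (hac : a ⊓ c = 0) (hbc : b ⊓ c = 0) : (a + b) ⊓ c = 0 := by
  refine le_antisymm ?_ (le_inf (add_nonneg ha hb) hc)
  calc (a + b) ⊓ c ≤ a ⊓ c + b ⊓ c := st_inf_add_le a b c ha hb hc
  _ = 0 := by rw [hac, hbc, add_zero]

lemma st_disj_nsmul (a c : X) (ha : 0 ≤ a) (hc : 0 ≤ c) (hac : a ⊓ c = 0) (n : ℕ) :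
    (n • a) ⊓ c = 0 := by
  induction n with
  | zero => simpa using hc
  | succ m ih =>
      rw [succ_nsmul]
      exact st_disj_add _ _ _ (nsmul_nonneg ha m) ha hc ih hac

/-- Jordan decomposition uniqueness: if `x = u - v` with `u, v ≥ 0` disjoint then `u = x⁺`. -/
lemma st_jordan_pos (x u v : X) (hu : 0 ≤ u) (hv : 0 ≤ v) (huv : u ⊓ v = 0)
    (hx : x = u - v) : x⁺ = u := by
  have h1 : u - x⁺ = 0 := by
    have : u - x⁺ = (u - x) ⊓ u := by
      rw [posPart_def, sub_eq_add_neg, neg_sup, add_inf, ← sub_eq_add_neg, neg_zero, add_zero]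
    rw [this, hx]
    have h2 : u - (u - v) = v := by abel
    rw [h2, inf_comm]
    exact huv
  exact (sub_eq_zero.mp h1).symm

end Lat



section Lat2
variable {X : Type*} [NormedAddCommGroup X] [Lattice X] [HasSolidNorm X] [IsOrderedAddMonoid X]

lemma st_nsmul_posPart (x : X) (n : ℕ) : (n • x)⁺ = n • x⁺ := by
  have hd : x⁺ ⊓ x⁻ = 0 := posPart_inf_negPart_eq_zero x
  have h1 : (n • x⁺) ⊓ x⁻ = 0 := st_disj_nsmul _ _ (posPart_nonneg x) (negPart_nonneg x) hd n
  have h2 : (n • x⁻) ⊓ (n • x⁺) = 0 := by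
    rw [inf_comm] at h1
    exact st_disj_nsmul _ _ (negPart_nonneg x) (nsmul_nonneg (posPart_nonneg x) n)
      h1 n
  refine st_jordan_pos _ _ (n • x⁻) (nsmul_nonneg (posPart_nonneg x) n)
    (nsmul_nonneg (negPart_nonneg x) n) (by rw [inf_comm]; exact h2) ?_
  rw [← smul_sub, posPart_sub_negPart]

lemma st_semiclosed (x : X) (n : ℕ) (hn : 0 < n) (h : 0 ≤ n • x) : 0 ≤ x := by
  have h1 : (n • x)⁻ = 0 := negPart_eq_zero.mpr h
  have h2 : (n • x)⁻ = n • x⁻ := by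
    have := st_nsmul_posPart (-x) n
    rw [smul_neg] at this
    simpa [negPart_def, posPart_def] using this
  have h3 : n • x⁻ = 0 := by rw [← h2]; exact h1
  have h4 : x⁻ ≤ n • x⁻ := by
    obtain ⟨m, rfl⟩ := Nat.exists_eq_succ_of_ne_zero hn.ne'
    rw [succ_nsmul]
    exact le_add_of_nonneg_left (nsmul_nonneg (negPart_nonneg x) m)
  rw [← negPart_eq_zero]
  exact le_antisymm (h4.trans h3.le) (negPart_nonneg x)

variable [NormedSpace ℝ X]

lemma st_smul_nonneg {s : ℝ} (hs : 0 ≤ s) {e : X} (he : 0 ≤ e) : 0 ≤ s • e := by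
  -- first: nonneg "rational" of the form a/(n+1)
  have hratio : ∀ (a n : ℕ), 0 ≤ ((a : ℝ) / (n + 1 : ℝ)) • e := by
    intro a n
    have hn : ((n + 1 : ℕ) : ℝ) = (n + 1 : ℝ) := by push_cast; ring
    apply st_semiclosed _ (n + 1) (Nat.succ_pos n)
    have : (n + 1 : ℕ) • (((a : ℝ) / (n + 1 : ℝ)) • e) = (a : ℕ) • e := by
      rw [← Nat.cast_smul_eq_nsmul ℝ, smul_smul, hn, mul_div_cancel₀, Nat.cast_smul_eq_nsmul]
      positivity
    rw [this]
    exact nsmul_nonneg he a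
  -- approximate s from above
  set u : ℕ → ℝ := fun n => (⌈s * (n + 1)⌉₊ : ℝ) / (n + 1 : ℝ) with hu
  have htend : Tendsto u atTop (𝓝 s) := by
    have hle : ∀ n : ℕ, ‖u n - s‖ ≤ 1 / (n + 1 : ℝ) := by
      intro n
      have hp : (0:ℝ) < ((n:ℝ) + 1) := by positivity
      have h1 : s ≤ u n := by
        rw [hu]; dsimp only
        rw [le_div_iff₀ hp]
        exact Nat.le_ceil _
      have h2 : u n ≤ s + 1 / ((n:ℝ) + 1) := by
        rw [hu]; dsimp only
        rw [div_le_iff₀ hp]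
        have hlt : (⌈s * ((n:ℝ) + 1)⌉₊ : ℝ) < s * ((n:ℝ) + 1) + 1 :=
          Nat.ceil_lt_add_one (by positivity)
        have : (s + 1 / ((n:ℝ) + 1)) * ((n:ℝ) + 1) = s * ((n:ℝ) + 1) + 1 := by
          field_simp
        rw [this]
        exact hlt.le
      rw [Real.norm_eq_abs, abs_of_nonneg (by linarith)]
      linarith
    have h0 : Tendsto (fun n : ℕ => 1 / (n + 1 : ℝ)) atTop (𝓝 0) :=
      tendsto_one_div_add_atTop_nhds_zero_nat
    have hz : Tendsto (fun n => u n - s) atTop (𝓝 0) := squeeze_zero_norm hle h0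
    have := hz.add_const s
    simpa using this
  have htend2 : Tendsto (fun n => u n • e) atTop (𝓝 (s • e)) := htend.smul_const e
  refine ge_of_tendsto htend2 (.of_forall fun n => hratio _ _)

lemma st_smul_mono {s t : ℝ} (hst : s ≤ t) {e : X} (he : 0 ≤ e) : s • e ≤ t • e := by
  have := st_smul_nonneg (sub_nonneg.mpr hst) he
  rw [sub_smul] at this
  exact sub_nonneg.mp this

end Lat2

section Lat3
variable {X : Type*} [NormedAddCommGroup X] [Lattice X] [HasSolidNorm X] [IsOrderedAddMonoid X] [NormedSpace ℝ X]

lemma st_disj_smul (a c : X) (ha : 0 ≤ a) (hc : 0 ≤ c) (hac : a ⊓ c = 0)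
    {s : ℝ} (hs : 0 ≤ s) : (s • a) ⊓ c = 0 := by
  have h1 : s • a ≤ (⌈s⌉₊ : ℕ) • a := by
    rw [← Nat.cast_smul_eq_nsmul ℝ]
    exact st_smul_mono (Nat.le_ceil s) ha
  refine le_antisymm ?_ (le_inf (st_smul_nonneg hs ha) hc)
  calc (s • a) ⊓ c ≤ ((⌈s⌉₊ : ℕ) • a) ⊓ c := inf_le_inf_right c h1
  _ = 0 := st_disj_nsmul a c ha hc hac _

lemma st_disj_smul₂ (a c : X) (ha : 0 ≤ a) (hc : 0 ≤ c) (hac : a ⊓ c = 0)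
    {s t : ℝ} (hs : 0 ≤ s) (ht : 0 ≤ t) : (s • a) ⊓ (t • c) = 0 := by
  rw [inf_comm]
  refine st_disj_smul _ _ hc (st_smul_nonneg hs ha) ?_ ht
  rw [inf_comm]
  exact st_disj_smul _ _ ha hc hac hs

lemma st_smul_inf (s t : ℝ) (e : X) (he : 0 ≤ e) :
    (s • e) ⊓ (t • e) = min s t • e := by
  rcases le_total s t with h | h
  · rw [inf_eq_left.mpr (st_smul_mono h he), min_eq_left h]
  · rw [inf_eq_right.mpr (st_smul_mono h he), min_eq_right h]

lemma st_cross_inf (a b c d : X) (ha : 0 ≤ a) (hb : 0 ≤ b) (hc : 0 ≤ c) (hd : 0 ≤ d)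
    (had : a ⊓ d = 0) (hbc : b ⊓ c = 0) : (a + b) ⊓ (c + d) = a ⊓ c + b ⊓ d := by
  refine le_antisymm ?_ ?_
  · have h1 : (a + b) ⊓ (c + d) ≤ (c + d) ⊓ (a + b) := by rw [inf_comm]
    calc (a + b) ⊓ (c + d) = (c + d) ⊓ (a + b) := by rw [inf_comm]
    _ ≤ c ⊓ (a + b) + d ⊓ (a + b) := st_inf_add_le c d (a + b) hc hd (add_nonneg ha hb)
    _ = (a + b) ⊓ c + (a + b) ⊓ d := by rw [inf_comm c _, inf_comm d _]
    _ ≤ (a ⊓ c + b ⊓ c) + (a ⊓ d + b ⊓ d) :=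
        add_le_add (st_inf_add_le a b c ha hb hc) (st_inf_add_le a b d ha hb hd)
    _ = a ⊓ c + b ⊓ d := by rw [hbc, had]; abel
  · exact le_inf (add_le_add inf_le_left inf_le_left)
      (add_le_add inf_le_right inf_le_right)

variable (e : ℕ → X)

lemma st_FS_nonneg (he0 : ∀ k, 0 ≤ e k) (F : Finset ℕ) (a : ℕ → ℝ) (ha : ∀ k, 0 ≤ a k) :
    0 ≤ ∑ k ∈ F, a k • e k :=
  Finset.sum_nonneg fun k _ => st_smul_nonneg (ha k) (he0 k)

lemma st_FS_disj (he0 : ∀ k, 0 ≤ e k) (hdisj : ∀ k l, k ≠ l → e k ⊓ e l = 0) (F : Finset ℕ) (a : ℕ → ℝ) (ha : ∀ k, 0 ≤ a k) (j : ℕ) (hj : j ∉ F)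
    (t : ℝ) (ht : 0 ≤ t) : (∑ k ∈ F, a k • e k) ⊓ (t • e j) = 0 := by
  classical
  induction F using Finset.induction with
  | empty =>
      simpa using inf_eq_left.mpr (st_smul_nonneg ht (he0 j))
  | @insert i F hiF ih =>
      rw [Finset.sum_insert hiF]
      have hij : i ≠ j := by rintro rfl; exact hj (Finset.mem_insert_self i F)
      refine st_disj_add _ _ _ (st_smul_nonneg (ha i) (he0 i))
        (st_FS_nonneg e he0 F a ha) (st_smul_nonneg ht (he0 j)) ?_ ?_
      · exact st_disj_smul₂ _ _ (he0 i) (he0 j) (hdisj i j hij) (ha i) ht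
      · exact ih (fun hjF => hj (Finset.mem_insert_of_mem hjF))

lemma st_FS_inf (he0 : ∀ k, 0 ≤ e k) (hdisj : ∀ k l, k ≠ l → e k ⊓ e l = 0) (F : Finset ℕ) (a b : ℕ → ℝ) (ha : ∀ k, 0 ≤ a k) (hb : ∀ k, 0 ≤ b k) :
    (∑ k ∈ F, a k • e k) ⊓ (∑ k ∈ F, b k • e k) = ∑ k ∈ F, min (a k) (b k) • e k := by
  classical
  induction F using Finset.induction with
  | empty => simp
  | @insert i F hiF ih =>
      rw [Finset.sum_insert hiF, Finset.sum_insert hiF, Finset.sum_insert hiF]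
      rw [st_cross_inf _ _ _ _ (st_smul_nonneg (ha i) (he0 i))
        (st_FS_nonneg e he0 F a ha) (st_smul_nonneg (hb i) (he0 i))
        (st_FS_nonneg e he0 F b hb) ?_ ?_]
      · rw [ih, st_smul_inf _ _ _ (he0 i)]
      · rw [inf_comm]
        exact st_FS_disj e he0 hdisj F b hb i hiF _ (ha i)
      · exact st_FS_disj e he0 hdisj F a ha i hiF _ (hb i)

lemma st_FS_sup (he0 : ∀ k, 0 ≤ e k) (hdisj : ∀ k l, k ≠ l → e k ⊓ e l = 0) (F : Finset ℕ) (a b : ℕ → ℝ) (ha : ∀ k, 0 ≤ a k) (hb : ∀ k, 0 ≤ b k) :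
    (∑ k ∈ F, a k • e k) ⊔ (∑ k ∈ F, b k • e k) = ∑ k ∈ F, max (a k) (b k) • e k := by
  have key := inf_add_sup (∑ k ∈ F, a k • e k) (∑ k ∈ F, b k • e k)
  rw [st_FS_inf e he0 hdisj F a b ha hb] at key
  have : ∑ k ∈ F, a k • e k + ∑ k ∈ F, b k • e k
      = ∑ k ∈ F, min (a k) (b k) • e k + ∑ k ∈ F, max (a k) (b k) • e k := by
    rw [← Finset.sum_add_distrib, ← Finset.sum_add_distrib]
    congr 1
    funext k
    rw [← add_smul, ← add_smul, min_add_max]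
  rw [this] at key
  exact add_left_cancel key

lemma st_FS_posPart (he0 : ∀ k, 0 ≤ e k) (hdisj : ∀ k l, k ≠ l → e k ⊓ e l = 0) (F : Finset ℕ) (a : ℕ → ℝ) :
    (∑ k ∈ F, a k • e k)⁺ = ∑ k ∈ F, (a k)⁺ • e k := by
  refine st_jordan_pos _ _ (∑ k ∈ F, (a k)⁻ • e k)
    (st_FS_nonneg e he0 F _ fun k => posPart_nonneg _)
    (st_FS_nonneg e he0 F _ fun k => negPart_nonneg _) ?_ ?_
  · rw [st_FS_inf e he0 hdisj F _ _ (fun k => posPart_nonneg _) (fun k => negPart_nonneg _)]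
    refine Finset.sum_eq_zero fun k _ => ?_
    have : min ((a k)⁺) ((a k)⁻) = 0 := posPart_inf_negPart_eq_zero (a k)
    rw [this, zero_smul]
  · rw [← Finset.sum_sub_distrib]
    refine Finset.sum_congr rfl fun k _ => ?_
    rw [← sub_smul, posPart_sub_negPart]

end Lat3

section Lat4
variable {X : Type*} [NormedAddCommGroup X] [Lattice X] [HasSolidNorm X] [IsOrderedAddMonoid X] [NormedSpace ℝ X] [CompleteSpace X]
variable (e : ℕ → X)

lemma st_summable_smul (M : ℝ) (hM : ∀ k, ‖e k‖ ≤ M) (a : ℕ → ℝ)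
    (hsa : Summable (fun k => |a k|)) : Summable (fun k => a k • e k) := by
  refine Summable.of_norm_bounded (g := fun k => |a k| * M) (hsa.mul_right M) fun k => ?_
  rw [norm_smul, Real.norm_eq_abs]
  exact mul_le_mul_of_nonneg_left (hM k) (abs_nonneg _)

lemma st_summable_smul' (M : ℝ) (hM : ∀ k, ‖e k‖ ≤ M) (a : ℕ → ℝ) (ha : ∀ k, 0 ≤ a k)
    (hsa : Summable a) : Summable (fun k => a k • e k) := by
  refine st_summable_smul e M hM a ?_
  refine hsa.congr fun k => (abs_of_nonneg (ha k)).symm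

lemma st_IS_nonneg (a : ℕ → ℝ) (ha : ∀ k, 0 ≤ a k) (u : X)
    (hu : HasSum (fun k => a k • e k) u) (he0 : ∀ k, 0 ≤ e k) : 0 ≤ u := by
  refine ge_of_tendsto hu.tendsto_sum_nat (.of_forall fun n => ?_)
  exact st_FS_nonneg e he0 (Finset.range n) a ha

lemma st_IS_inf (he0 : ∀ k, 0 ≤ e k) (hdisj : ∀ k l, k ≠ l → e k ⊓ e l = 0)
    (M : ℝ) (hM : ∀ k, ‖e k‖ ≤ M)
    (a b : ℕ → ℝ) (ha : ∀ k, 0 ≤ a k) (hb : ∀ k, 0 ≤ b k) (hsa : Summable a)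
    (u v : X) (hu : HasSum (fun k => a k • e k) u) (hv : HasSum (fun k => b k • e k) v) :
    HasSum (fun k => min (a k) (b k) • e k) (u ⊓ v) := by
  have hmin : Summable (fun k => min (a k) (b k)) :=
    Summable.of_nonneg_of_le (fun k => le_min (ha k) (hb k)) (fun k => min_le_left _ _) hsa
  have hms : Summable (fun k => min (a k) (b k) • e k) :=
    st_summable_smul' e M hM _ (fun k => le_min (ha k) (hb k)) hmin
  have h1 : Tendsto (fun n => ∑ k ∈ Finset.range n, min (a k) (b k) • e k) atTop (𝓝 (u ⊓ v)) := by
    have := (hu.tendsto_sum_nat).inf_nhds (hv.tendsto_sum_nat)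
    refine this.congr fun n => ?_
    exact st_FS_inf e he0 hdisj (Finset.range n) a b ha hb
  have h2 := hms.hasSum.tendsto_sum_nat
  have h3 : ∑' k, min (a k) (b k) • e k = u ⊓ v := tendsto_nhds_unique h2 h1
  have h4 := hms.hasSum
  rwa [h3] at h4

lemma st_IS_sup (he0 : ∀ k, 0 ≤ e k) (hdisj : ∀ k l, k ≠ l → e k ⊓ e l = 0)
    (M : ℝ) (hM : ∀ k, ‖e k‖ ≤ M)
    (a b : ℕ → ℝ) (ha : ∀ k, 0 ≤ a k) (hb : ∀ k, 0 ≤ b k) (hsa : Summable a) (hsb : Summable b)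
    (u v : X) (hu : HasSum (fun k => a k • e k) u) (hv : HasSum (fun k => b k • e k) v) :
    HasSum (fun k => max (a k) (b k) • e k) (u ⊔ v) := by
  have hmax : Summable (fun k => max (a k) (b k)) := by
    refine Summable.of_nonneg_of_le (fun k => le_max_of_le_left (ha k))
      (fun k => ?_) (hsa.add hsb)
    exact max_le (le_add_of_nonneg_right (hb k)) (le_add_of_nonneg_left (ha k))
  have hms : Summable (fun k => max (a k) (b k) • e k) :=
    st_summable_smul' e M hM _ (fun k => le_max_of_le_left (ha k)) hmax
  have h1 : Tendsto (fun n => ∑ k ∈ Finset.range n, max (a k) (b k) • e k) atTop (𝓝 (u ⊔ v)) := by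
    have := (hu.tendsto_sum_nat).sup_nhds (hv.tendsto_sum_nat)
    refine this.congr fun n => ?_
    exact st_FS_sup e he0 hdisj (Finset.range n) a b ha hb
  have h2 := hms.hasSum.tendsto_sum_nat
  have h3 : ∑' k, max (a k) (b k) • e k = u ⊔ v := tendsto_nhds_unique h2 h1
  have h4 := hms.hasSum
  rwa [h3] at h4

lemma st_IS_posPart (he0 : ∀ k, 0 ≤ e k) (hdisj : ∀ k l, k ≠ l → e k ⊓ e l = 0)
    (M : ℝ) (hM : ∀ k, ‖e k‖ ≤ M)
    (a : ℕ → ℝ) (hsa : Summable (fun k => |a k|))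
    (u : X) (hu : HasSum (fun k => a k • e k) u) :
    HasSum (fun k => (a k)⁺ • e k) (u⁺) := by
  have hpos : Summable (fun k => (a k)⁺) := by
    refine Summable.of_nonneg_of_le (fun k => posPart_nonneg _) (fun k => ?_) hsa
    rw [posPart_def]
    exact sup_le (le_abs_self _) (abs_nonneg _)
  have hms : Summable (fun k => (a k)⁺ • e k) :=
    st_summable_smul' e M hM _ (fun k => posPart_nonneg _) hpos
  have h1 : Tendsto (fun n => ∑ k ∈ Finset.range n, (a k)⁺ • e k) atTop (𝓝 (u⁺)) := by
    have := (hu.tendsto_sum_nat).sup_nhds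
      (tendsto_const_nhds : Tendsto (fun _ : ℕ => (0:X)) atTop (𝓝 0))
    refine this.congr fun n => ?_
    rw [← st_FS_posPart e he0 hdisj (Finset.range n) a, posPart_def]
  have h2 := hms.hasSum.tendsto_sum_nat
  have h3 : ∑' k, (a k)⁺ • e k = u⁺ := tendsto_nhds_unique h2 h1
  have h4 := hms.hasSum
  rwa [h3] at h4

end Lat4

section Cluster

lemma st_dir_combine (D : DirectedType) (F : Finset ℕ) (T : ℕ → D.ι) :
    ∃ j, ∀ k ∈ F, ∀ i, D.r j i → D.r (T k) i := by
  classical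
  induction F using Finset.induction with
  | empty => exact ⟨Classical.choice D.nonempty, fun k hk => by simp at hk⟩
  | @insert m F hmF ih =>
      obtain ⟨j', hj'⟩ := ih
      obtain ⟨j, hj1, hj2⟩ := D.directed j' (T m)
      refine ⟨j, fun k hk i hi => ?_⟩
      rcases Finset.mem_insert.mp hk with rfl | hk
      · exact D.trans _ _ _ hj2 hi
      · exact hj' k hk i (D.trans _ _ _ hj1 hi)

lemma st_cluster (D : DirectedType) (P : D.ι → Prop)
    (hfreq : ∀ i₀, ∃ i, D.r i₀ i ∧ P i) (u : D.ι → ℝ)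
    (hb : ∀ i, u i ∈ Set.Icc (0:ℝ) 1) :
    ∃ t, ∀ i₀, t ∈ closure (u '' {i | D.r i₀ i ∧ P i}) := by
  set A : D.ι → Set ℝ := fun i₀ => closure (u '' {i | D.r i₀ i ∧ P i}) with hA
  have hne : ∀ i₀, (A i₀).Nonempty := by
    intro i₀
    obtain ⟨i, hi, hP⟩ := hfreq i₀
    exact ⟨u i, subset_closure ⟨i, ⟨hi, hP⟩, rfl⟩⟩
  have hsub : ∀ i₀, A i₀ ⊆ Set.Icc (0:ℝ) 1 := by
    intro i₀
    refine closure_minimal ?_ isClosed_Icc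
    rintro x ⟨i, _, rfl⟩
    exact hb i
  have hcpt : ∀ i₀, IsCompact (A i₀) := fun i₀ =>
    IsCompact.of_isClosed_subset isCompact_Icc isClosed_closure (hsub i₀)
  have hdir : Directed (· ⊇ ·) A := by
    intro i₀ j₀
    obtain ⟨k, hk1, hk2⟩ := D.directed i₀ j₀
    refine ⟨k, ?_, ?_⟩ <;>
    · refine closure_mono (Set.image_mono ?_)
      rintro i ⟨hi, hP⟩
      exact ⟨D.trans _ _ _ (by assumption) hi, hP⟩
  have : Nonempty D.ι := D.nonempty
  obtain ⟨t, ht⟩ := IsCompact.nonempty_iInter_of_directed_nonempty_isCompact_isClosed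
    A hdir hne hcpt (fun i₀ => isClosed_closure)
  exact ⟨t, fun i₀ => Set.mem_iInter.mp ht i₀⟩

lemma st_cluster_near {α : Type*} {u : α → ℝ} {S : Set α} {t : ℝ} (ht : t ∈ closure (u '' S))
    {δ : ℝ} (hδ : 0 < δ) : ∃ i ∈ S, |u i - t| < δ := by
  obtain ⟨y, ⟨i, hiS, rfl⟩, hdist⟩ := Metric.mem_closure_iff.mp ht δ hδ
  exact ⟨i, hiS, by rwa [Real.dist_eq, abs_sub_comm] at hdist⟩

end Cluster

section Lat5
variable {X : Type*} [NormedAddCommGroup X] [Lattice X] [HasSolidNorm X] [IsOrderedAddMonoid X] [NormedSpace ℝ X] [CompleteSpace X]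
variable (e : ℕ → X)

lemma st_expand (he0 : ∀ k, 0 ≤ e k) (hdisj : ∀ k l, k ≠ l → e k ⊓ e l = 0)
    (a : ℕ → ℝ) (ha : ∀ k, 0 ≤ a k) (ha1 : ∀ k, a k ≤ 1) (x : X)
    (hx : HasSum (fun k => a k • e k) x) (k : ℕ) :
    x ⊓ ((2:ℝ) • e k) = a k • e k := by
  classical
  have hsingle : HasSum (fun j => if j = k then a k • e k else 0) (a k • e k) :=
    hasSum_ite_eq k _
  have hwsum : HasSum (fun j => (if j = k then 0 else a j) • e j) (x - a k • e k) := by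
    have hsub := hx.sub hsingle
    refine hsub.congr_fun fun j => ?_
    by_cases hj : j = k
    · subst hj; simp
    · simp [hj]
  set w := x - a k • e k with hw
  have hw0 : 0 ≤ w :=
    st_IS_nonneg e _ (fun j => by by_cases hj : j = k <;> simp [hj, ha j]) w hwsum he0
  have hwek : w ⊓ e k = 0 := by
    have hP : ∀ n : ℕ, (∑ j ∈ Finset.range n, (if j = k then 0 else a j) • e j) ⊓ e k = 0 := by
      intro n
      have herase : (∑ j ∈ Finset.range n, (if j = k then 0 else a j) • e j)
          = ∑ j ∈ (Finset.range n).erase k, (if j = k then 0 else a j) • e j := by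
        refine (Finset.sum_erase _ ?_).symm
        simp
      rw [herase]
      have := st_FS_disj e he0 hdisj ((Finset.range n).erase k)
        (fun j => if j = k then 0 else a j)
        (fun j => by by_cases hj : j = k <;> simp [hj, ha j])
        k (Finset.notMem_erase k _) 1 zero_le_one
      simpa using this
    have h1 : Tendsto (fun n => (∑ j ∈ Finset.range n, (if j = k then 0 else a j) • e j) ⊓ e k)
        atTop (𝓝 (w ⊓ e k)) :=
      (hwsum.tendsto_sum_nat).inf_nhds tendsto_const_nhds
    have h2 : Tendsto (fun _ : ℕ => (0 : X)) atTop (𝓝 0) := tendsto_const_nhds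
    have := tendsto_nhds_unique (h1.congr fun n => hP n) h2
    exact this.symm ▸ this
  have hx' : x = a k • e k + w := by rw [hw]; abel
  refine le_antisymm ?_ ?_
  · have hsplit : x ⊓ ((2:ℝ) • e k) ≤ (a k • e k) ⊓ ((2:ℝ) • e k) + w ⊓ ((2:ℝ) • e k) := by
      rw [hx']
      exact st_inf_add_le _ _ _ (st_smul_nonneg (ha k) (he0 k)) hw0
        (st_smul_nonneg (by norm_num) (he0 k))
    have hw2 : w ⊓ ((2:ℝ) • e k) = 0 := by
      rw [inf_comm]
      exact st_disj_smul (e k) w (he0 k) hw0 (by rw [inf_comm]; exact hwek) (by norm_num)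
    have hak2 : (a k • e k) ⊓ ((2:ℝ) • e k) = a k • e k := by
      rw [st_smul_inf _ _ _ (he0 k), min_eq_left (by linarith [ha1 k])]
    rw [hw2, hak2, add_zero] at hsplit
    exact hsplit
  · refine le_inf ?_ (st_smul_mono (by linarith [ha1 k]) (he0 k))
    refine le_hasSum hx k fun j _ => st_smul_nonneg (ha j) (he0 j)

omit [CompleteSpace X] in
lemma st_cluster_limit (E : DirectedType) (h : E.ι → X) (hglb : IsGLB (Set.range h) 0)
    (D : DirectedType) (v : D.ι → X) (z : X)
    (hdom : ∀ γ, ∃ i₀, ∀ i, D.r i₀ i → |v i - z| ≤ h γ)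
    (s : D.ι → ℝ) (t : ℝ) (e₀ : X) (he₀ : 0 ≤ e₀)
    (hrep : ∀ i, v i = s i • e₀)
    (hclust : ∀ δ, 0 < δ → ∀ i₀, ∃ i, D.r i₀ i ∧ |s i - t| < δ) :
    z = t • e₀ := by
  set a := |t • e₀ - z| with ha
  have key : ∀ γ, a ≤ h γ := by
    intro γ
    obtain ⟨i₀, hi₀⟩ := hdom γ
    have hδ : ∀ δ : ℝ, 0 < δ → a - h γ ≤ δ • e₀ := by
      intro δ hδpos
      obtain ⟨i, hri, hsi⟩ := hclust δ hδpos i₀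
      have h1 : |t • e₀ - v i| ≤ δ • e₀ := by
        rw [hrep i, ← sub_smul]
        rcases le_total (s i) t with hst | hst
        · rw [abs_of_nonneg (st_smul_nonneg (by linarith) he₀)]
          refine st_smul_mono ?_ he₀
          have := abs_lt.mp hsi
          linarith [this.1, this.2]
        · have hrw : (t - s i) • e₀ = -((s i - t) • e₀) := by
            rw [← neg_smul]; congr 1; ring
          have h0 : 0 ≤ (s i - t) • e₀ := st_smul_nonneg (by linarith) he₀
          rw [hrw, abs_of_nonpos (neg_nonpos.mpr h0), neg_neg]
          refine st_smul_mono ?_ he₀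
          have := abs_lt.mp hsi
          linarith [this.1, this.2]
      have h2 : a ≤ |t • e₀ - v i| + |v i - z| := by
        rw [ha]
        have hsplit : t • e₀ - z = (t • e₀ - v i) + (v i - z) := by abel
        rw [hsplit]
        exact abs_add_le _ _
      have h3 : a ≤ δ • e₀ + h γ := h2.trans (add_le_add h1 (hi₀ i hri))
      exact sub_le_iff_le_add.mpr h3

    have hten : Tendsto (fun n : ℕ => (1 / ((n:ℝ) + 1)) • e₀) atTop (𝓝 0) := by
      have := (tendsto_one_div_add_atTop_nhds_zero_nat (𝕜 := ℝ)).smul_const e₀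
      simpa using this
    have hclosed : IsClosed {y : X | a - h γ ≤ y} :=
      isClosed_le continuous_const continuous_id
    have hmem : a - h γ ≤ (0 : X) := by
      refine hclosed.mem_of_tendsto hten (.of_forall fun n => ?_)
      exact hδ _ (by positivity)
    exact sub_nonpos.mp hmem
  have hlb : a ∈ lowerBounds (Set.range h) := by rintro y ⟨γ, rfl⟩; exact key γ
  have ha0 : a ≤ 0 := hglb.2 hlb
  have : a = 0 := le_antisymm ha0 (abs_nonneg _)
  have hz : t • e₀ - z = 0 := by
    have habs : |t • e₀ - z| = 0 := by rw [← ha]; exact this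
    have h1 : t • e₀ - z ≤ 0 := by
      calc t • e₀ - z ≤ |t • e₀ - z| := le_abs_self _
      _ = 0 := habs
    have h2 : 0 ≤ t • e₀ - z := by
      have hn : -(t • e₀ - z) ≤ (0:X) := by
        calc -(t • e₀ - z) ≤ |t • e₀ - z| := neg_le_abs _
        _ = 0 := habs
      exact neg_nonpos.mp hn
    exact le_antisymm h1 h2
  exact (sub_eq_zero.mp hz).symm

end Lat5

section Lat6
variable {X : Type*} [NormedAddCommGroup X] [Lattice X] [HasSolidNorm X] [IsOrderedAddMonoid X] [NormedSpace ℝ X] [CompleteSpace X]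
variable (e : ℕ → X)

lemma st_noescape (he0 : ∀ k, 0 ≤ e k) (hdisj : ∀ k l, k ≠ l → e k ⊓ e l = 0)
    (M : ℝ) (hM : ∀ k, ‖e k‖ ≤ M)
    (g : X →L[ℝ] ℝ) (ε : ℝ) (hε : 0 < ε) (hge : ∀ k, ε ≤ g (e k))
    (D : DirectedType) (w : D.ι → X) (μ : D.ι → ℕ → ℝ)
    (hμ0 : ∀ i k, 0 ≤ μ i k) (hμs : ∀ i, Summable (μ i))
    (hw : ∀ i, HasSum (fun k => μ i k • e k) (w i))
    (δ : ℝ) (hδ : 0 < δ) (hmass : ∀ i, δ ≤ ∑' k, μ i k)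
    (E : DirectedType) (h : E.ι → X) (hglb : IsGLB (Set.range h) 0)
    (hdom : ∀ γ, ∃ i₀, ∀ i, D.r i₀ i → w i ≤ h γ) : False := by
  classical
  by_cases hcase : ∃ k δ', 0 < δ' ∧ ∀ i₀, ∃ i, D.r i₀ i ∧ δ' ≤ μ i k
  · -- Case 1: a coordinate stays bounded away from 0 frequently
    obtain ⟨k, δ', hδ', hfr⟩ := hcase
    have hlow : ∀ γ, δ' • e k ≤ h γ := by
      intro γ
      obtain ⟨i₀, hi₀⟩ := hdom γ
      obtain ⟨i, hri, hik⟩ := hfr i₀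
      calc δ' • e k ≤ μ i k • e k := st_smul_mono hik (he0 k)
      _ ≤ w i := le_hasSum (hw i) k fun j _ => st_smul_nonneg (hμ0 i j) (he0 j)
      _ ≤ h γ := hi₀ i hri
    have hlb : δ' • e k ∈ lowerBounds (Set.range h) := by
      rintro y ⟨γ, rfl⟩; exact hlow γ
    have h1 : δ' • e k ≤ 0 := hglb.2 hlb
    have h2 : δ' • e k = 0 := le_antisymm h1 (st_smul_nonneg hδ'.le (he0 k))
    have h3 : e k = 0 := by
      rcases smul_eq_zero.mp h2 with hh | hh
      · exact absurd hh hδ'.ne'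
      · exact hh
    have := hge k
    rw [h3, map_zero] at this
    linarith
  · -- Case 2: all coordinates eventually small
    push_neg at hcase
    have hEne : Nonempty E.ι := E.nonempty
    obtain ⟨γs⟩ := hEne
    obtain ⟨istar, histar⟩ := hdom γs
    -- one construction step
    have hstep : ∀ (cur : D.ι) (U : Finset ℕ), ∃ p : D.ι × Finset ℕ,
        D.r cur p.1 ∧ (∀ k ∈ p.2, k ∉ U) ∧ δ/2 ≤ ∑ k ∈ p.2, μ p.1 k := by
      intro cur U
      set δ'' := δ / (4 * ((U.card : ℝ) + 1)) with hδ''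
      have hδ''pos : 0 < δ'' := by rw [hδ'']; positivity
      have hthr : ∀ k : ℕ, ∃ i₀, ∀ i, D.r i₀ i → μ i k < δ'' := fun k =>
        hcase k δ'' hδ''pos
      choose T hT using hthr
      obtain ⟨j, hj⟩ := st_dir_combine D U T
      obtain ⟨c, hc1, hc2⟩ := D.directed cur j
      have hten := (hμs c).hasSum.tendsto_sum_nat
      have hlt : δ - δ/4 < ∑' k, μ c k := by linarith [hmass c]
      obtain ⟨n, hn⟩ := (hten.eventually (eventually_gt_nhds hlt)).exists
      set F0 := Finset.range n with hF0
      refine ⟨⟨c, F0 \ U⟩, hc1, fun k hk => (Finset.mem_sdiff.mp hk).2, ?_⟩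
      have hsplit : ∑ k ∈ F0 ∩ U, μ c k + ∑ k ∈ F0 \ U, μ c k = ∑ k ∈ F0, μ c k :=
        Finset.sum_inter_add_sum_sdiff F0 U (μ c)
      have hsmallU : ∑ k ∈ F0 ∩ U, μ c k ≤ δ/4 := by
        have hbound : ∀ k ∈ F0 ∩ U, μ c k ≤ δ'' := by
          intro k hk
          have hkU : k ∈ U := (Finset.mem_inter.mp hk).2
          exact (hT k c (hj k hkU c hc2)).le
        have hcard : ((F0 ∩ U).card : ℝ) ≤ (U.card : ℝ) := by
          exact_mod_cast Finset.card_le_card Finset.inter_subset_right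
        calc ∑ k ∈ F0 ∩ U, μ c k ≤ (F0 ∩ U).card • δ'' :=
              Finset.sum_le_card_nsmul _ _ _ hbound
        _ = ((F0 ∩ U).card : ℝ) * δ'' := nsmul_eq_mul _ _
        _ ≤ (U.card : ℝ) * δ'' := mul_le_mul_of_nonneg_right hcard hδ''pos.le
        _ ≤ δ/4 := by
            rw [hδ'']
            rw [mul_div_assoc']
            rw [div_le_div_iff₀ (by positivity) (by norm_num)]
            have hc0 : (0:ℝ) ≤ (U.card : ℝ) := Nat.cast_nonneg _
            nlinarith [hδ.le]
      have heq : ∑ k ∈ F0 \ U, μ c k = ∑ k ∈ F0, μ c k - ∑ k ∈ F0 ∩ U, μ c k := by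
        rw [← hsplit]; ring
      rw [heq]
      linarith [hn.le]
    -- iterate the construction
    let stf : ℕ → D.ι × Finset ℕ × Finset ℕ := fun n =>
      Nat.rec (motive := fun _ => D.ι × Finset ℕ × Finset ℕ)
        (let p := Classical.choose (hstep istar ∅); (p.1, p.2, p.2))
        (fun _ prev =>
          let p := Classical.choose (hstep prev.1 prev.2.2); (p.1, p.2, prev.2.2 ∪ p.2)) n
    set idx : ℕ → D.ι := fun n => (stf n).1 with hidx
    set Fs : ℕ → Finset ℕ := fun n => (stf n).2.1 with hFs
    set Us : ℕ → Finset ℕ := fun n => (stf n).2.2 with hUs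
    have hspec0 := Classical.choose_spec (hstep istar ∅)
    have hspecS : ∀ n, D.r (idx n) (idx (n+1)) ∧ (∀ k ∈ Fs (n+1), k ∉ Us n) ∧
        δ/2 ≤ ∑ k ∈ Fs (n+1), μ (idx (n+1)) k := by
      intro n
      exact Classical.choose_spec (hstep (stf n).1 (stf n).2.2)
    have hUsS : ∀ n, Us (n+1) = Us n ∪ Fs (n+1) := fun n => rfl
    have hUs0 : Us 0 = Fs 0 := rfl
    -- invariants
    have hP1 : ∀ n, D.r istar (idx n) := by
      intro n
      induction n with
      | zero => exact hspec0.1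
      | succ m ih => exact D.trans _ _ _ ih (hspecS m).1
    have hP2 : ∀ n, δ/2 ≤ ∑ k ∈ Fs n, μ (idx n) k := by
      intro n
      cases n with
      | zero => exact hspec0.2.2
      | succ m => exact (hspecS m).2.2
    have hP3 : ∀ n, ∀ m ≤ n, Fs m ⊆ Us n := by
      intro n
      induction n with
      | zero => intro m hm; interval_cases m; rw [hUs0]
      | succ p ih =>
          intro m hm
          rcases Nat.lt_or_ge m (p+1) with hlt | hge
          · have := ih m (Nat.lt_succ_iff.mp hlt)
            rw [hUsS p]
            exact this.trans Finset.subset_union_left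
          · have hme : m = p + 1 := le_antisymm hm hge
            subst hme
            rw [hUsS p]
            exact Finset.subset_union_right
    have hdisjF : ∀ m n, m < n → Disjoint (Fs m) (Fs n) := by
      intro m n hmn
      obtain ⟨p, rfl⟩ := Nat.exists_eq_add_of_lt hmn
      rw [Finset.disjoint_left]
      intro k hkm hkn
      exact (hspecS (m+p)).2.1 k hkn (hP3 (m+p) m (Nat.le_add_right _ _) hkm)
    -- running maxima of coefficients and running suprema
    let Mc : ℕ → ℕ → ℝ := fun n =>
      Nat.rec (motive := fun _ => ℕ → ℝ) (fun k => μ (idx 0) k)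
        (fun m prev k => max (prev k) (μ (idx (m+1)) k)) n
    let V : ℕ → X := fun n =>
      Nat.rec (motive := fun _ => X) (w (idx 0)) (fun m prev => prev ⊔ w (idx (m+1))) n
    have hMcS : ∀ n k, Mc (n+1) k = max (Mc n k) (μ (idx (n+1)) k) := fun n k => rfl
    have hVS : ∀ n, V (n+1) = V n ⊔ w (idx (n+1)) := fun n => rfl
    have hQ : ∀ n, Summable (Mc n) ∧ (∀ k, 0 ≤ Mc n k) ∧
        HasSum (fun k => Mc n k • e k) (V n) := by
      intro n
      induction n with
      | zero => exact ⟨hμs (idx 0), fun k => hμ0 _ k, hw (idx 0)⟩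
      | succ m ih =>
          obtain ⟨ihs, ih0, ihh⟩ := ih
          have hmax0 : ∀ k, 0 ≤ Mc (m+1) k := fun k =>
            le_max_of_le_left (ih0 k)
          have hmaxs : Summable (Mc (m+1)) := by
            refine Summable.of_nonneg_of_le hmax0 (fun k => ?_) (ihs.add (hμs (idx (m+1))))
            rw [hMcS]
            exact max_le (le_add_of_nonneg_right (hμ0 _ k))
              (le_add_of_nonneg_left (ih0 k))
          refine ⟨hmaxs, hmax0, ?_⟩
          rw [hVS]
          exact st_IS_sup e he0 hdisj M hM (Mc m) (μ (idx (m+1))) ih0 (hμ0 _)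
            ihs (hμs _) _ _ ihh (hw _)
    have hVle : ∀ n, V n ≤ h γs := by
      intro n
      induction n with
      | zero => exact histar _ (hP1 0)
      | succ m ih =>
          rw [hVS]
          exact sup_le ih (histar _ (hP1 (m+1)))
    have hV0 : ∀ n, 0 ≤ V n := by
      intro n
      induction n with
      | zero => exact st_IS_nonneg e _ (fun k => hμ0 _ k) _ (hw (idx 0)) he0
      | succ m ih => exact ih.trans (by rw [hVS]; exact le_sup_left)
    have hMcge : ∀ n j, j ≤ n → ∀ k, μ (idx j) k ≤ Mc n k := by
      intro n
      induction n with
      | zero =>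
          intro j hj k
          interval_cases j
          exact le_rfl
      | succ m ih =>
          intro j hj k
          rcases Nat.lt_or_ge j (m+1) with hlt | hge
          · exact (ih j (Nat.lt_succ_iff.mp hlt) k).trans (by rw [hMcS]; exact le_max_left _ _)
          · have : j = m+1 := le_antisymm hj hge
            subst this
            rw [hMcS]
            exact le_max_right _ _
    -- the mass lower bound
    have hmassV : ∀ n : ℕ, ((n:ℝ)+1) * (δ/2) ≤ ∑' k, Mc n k := by
      intro n
      obtain ⟨hsum, h0, _⟩ := hQ n
      set B := (Finset.range (n+1)).biUnion Fs with hB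
      have hpd : Set.PairwiseDisjoint ↑(Finset.range (n+1)) Fs := by
        intro a _ b _ hab
        rcases Nat.lt_or_ge a b with hlt | hge
        · exact hdisjF a b hlt
        · exact (hdisjF b a (lt_of_le_of_ne hge (Ne.symm hab))).symm
      have h1 : ∑ k ∈ B, Mc n k ≤ ∑' k, Mc n k :=
        Summable.sum_le_tsum B (fun k _ => h0 k) hsum
      have h2 : ∑ k ∈ B, Mc n k = ∑ j ∈ Finset.range (n+1), ∑ k ∈ Fs j, Mc n k :=
        Finset.sum_biUnion hpd
      have h3 : ∀ j ∈ Finset.range (n+1), δ/2 ≤ ∑ k ∈ Fs j, Mc n k := by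
        intro j hj
        have hjn : j ≤ n := Nat.lt_succ_iff.mp (Finset.mem_range.mp hj)
        refine (hP2 j).trans (Finset.sum_le_sum fun k _ => hMcge n j hjn k)
      have h4 : ((n:ℝ)+1) * (δ/2) ≤ ∑ j ∈ Finset.range (n+1), ∑ k ∈ Fs j, Mc n k := by
        have := Finset.card_nsmul_le_sum (Finset.range (n+1))
          (fun j => ∑ k ∈ Fs j, Mc n k) (δ/2) h3
        rw [Finset.card_range, nsmul_eq_mul] at this
        push_cast at this ⊢
        linarith
      linarith [h2 ▸ h4, h1]
    -- evaluate g
    have hgV : ∀ n : ℕ, ε * (((n:ℝ)+1) * (δ/2)) ≤ g (V n) := by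
      intro n
      obtain ⟨hsum, h0, hhs⟩ := hQ n
      have hmap : HasSum (fun k => Mc n k * g (e k)) (g (V n)) := by
        have := hhs.mapL g
        refine this.congr_fun fun k => ?_
        simp [map_smul, smul_eq_mul]
      have hεsum : HasSum (fun k => ε * Mc n k) (ε * ∑' k, Mc n k) :=
        hsum.hasSum.mul_left ε
      have hle : ε * ∑' k, Mc n k ≤ g (V n) := by
        rw [← hmap.tsum_eq, ← hεsum.tsum_eq]
        refine Summable.tsum_le_tsum (fun k => ?_) hεsum.summable hmap.summable
        rw [mul_comm]
        exact mul_le_mul_of_nonneg_left (hge k) (h0 k)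
      have := mul_le_mul_of_nonneg_left (hmassV n) hε.le
      linarith
    have hup : ∀ n : ℕ, g (V n) ≤ ‖g‖ * ‖h γs‖ := by
      intro n
      have h1 : g (V n) ≤ ‖g (V n)‖ := le_trans (le_abs_self _) (by rw [Real.norm_eq_abs])
      have h2 : ‖g (V n)‖ ≤ ‖g‖ * ‖V n‖ := g.le_opNorm (V n)
      have h3 : ‖V n‖ ≤ ‖h γs‖ := by
        refine norm_le_norm_of_abs_le_abs ?_
        rw [abs_of_nonneg (hV0 n)]
        exact (hVle n).trans (le_abs_self _)
      calc g (V n) ≤ ‖g‖ * ‖V n‖ := h1.trans h2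
      _ ≤ ‖g‖ * ‖h γs‖ := mul_le_mul_of_nonneg_left h3 (norm_nonneg _)
    -- contradiction
    obtain ⟨n, hn⟩ := exists_nat_gt ((‖g‖ * ‖h γs‖) / (ε * (δ/2)))
    have hpos : 0 < ε * (δ/2) := by positivity
    have hfin : ε * (((n:ℝ)+1) * (δ/2)) ≤ ‖g‖ * ‖h γs‖ := (hgV n).trans (hup n)
    rw [div_lt_iff₀ hpos] at hn
    nlinarith

end Lat6

section Lat7
variable {X : Type*} [NormedAddCommGroup X] [Lattice X] [HasSolidNorm X] [IsOrderedAddMonoid X] [NormedSpace ℝ X] [CompleteSpace X]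

/-- The norm closed convex hull of a disjoint sequence, described by `ℓ¹` coefficients. -/
def stK (e : ℕ → X) : Set X :=
  {x : X | ∃ lam : ℕ → ℝ, (∀ k, 0 ≤ lam k) ∧ HasSum lam 1 ∧ HasSum (fun k => lam k • e k) x}

lemma st_K_orderClosed (e : ℕ → X) (he0 : ∀ k, 0 ≤ e k)
    (hdisj : ∀ k l, k ≠ l → e k ⊓ e l = 0) (M : ℝ) (hM : ∀ k, ‖e k‖ ≤ M)
    (g : X →L[ℝ] ℝ) (ε : ℝ) (hε : 0 < ε) (hge : ∀ k, ε ≤ g (e k)) :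
    IsOrderClosed (stK e) := by
  classical
  rintro x ⟨D, f, hfK, E, h, hdec, hglb, hdomx⟩
  have hDne : Nonempty D.ι := D.nonempty
  obtain ⟨i₀⟩ := hDne
  have hh0 : ∀ γ, 0 ≤ h γ := fun γ => hglb.1 ⟨γ, rfl⟩
  choose lam hlam0 hlam1 hlamS using hfK
  have hlam01 : ∀ i k, lam i k ≤ 1 := by
    intro i k
    have := le_hasSum (hlam1 i) k fun j _ => hlam0 i j
    linarith
  have hek0 : ∀ k, e k ≠ 0 := by
    intro k hk
    have := hge k
    rw [hk, map_zero] at this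
    linarith
  have hf0 : ∀ i, 0 ≤ f i :=
    fun i => st_IS_nonneg e (lam i) (hlam0 i) _ (hlamS i) he0
  -- cluster coordinates
  have hcex : ∀ k : ℕ, ∃ t : ℝ,
      ∀ j₀, t ∈ closure ((fun i => lam i k) '' {i | D.r j₀ i ∧ True}) := by
    intro k
    exact st_cluster D (fun _ => True) (fun j₀ => ⟨j₀, D.refl j₀, trivial⟩)
      (fun i => lam i k) (fun i => ⟨hlam0 i k, hlam01 i k⟩)
  choose c hc using hcex
  have hc01 : ∀ k, 0 ≤ c k ∧ c k ≤ 1 := by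
    intro k
    have hsub : ((fun i => lam i k) '' {i | D.r i₀ i ∧ True}) ⊆ Set.Icc (0:ℝ) 1 := by
      rintro t ⟨i, _, rfl⟩; exact ⟨hlam0 i k, hlam01 i k⟩
    have := closure_minimal hsub isClosed_Icc (hc k i₀)
    exact ⟨this.1, this.2⟩
  -- key: the k-th component of x
  have hxk : ∀ k, x ⊓ ((2:ℝ) • e k) = c k • e k := by
    intro k
    refine st_cluster_limit E h hglb D (fun i => f i ⊓ ((2:ℝ) • e k)) _
      ?_ (fun i => lam i k) (c k) (e k) (he0 k) ?_ ?_
    · intro γ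
      obtain ⟨j₀, hj₀⟩ := hdomx γ
      exact ⟨j₀, fun i hi => (abs_inf_sub_inf_le_abs _ _ _).trans (hj₀ i hi)⟩
    · intro i
      exact st_expand e he0 hdisj (lam i) (hlam0 i) (hlam01 i) _ (hlamS i) k
    · intro δ hδ j₀
      obtain ⟨i, ⟨hri, _⟩, hnear⟩ := st_cluster_near (hc k j₀) hδ
      exact ⟨i, hri, hnear⟩
  -- coordinatewise convergence
  have hconvk : ∀ k, ∀ δ : ℝ, 0 < δ → ∃ j₀, ∀ i, D.r j₀ i → |lam i k - c k| < δ := by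
    intro k δ hδ
    by_contra hne
    push_neg at hne
    have hfreq : ∀ j₀, ∃ i, D.r j₀ i ∧ δ ≤ |lam i k - c k| := by
      intro j₀
      obtain ⟨i, hri, hge'⟩ := hne j₀
      exact ⟨i, hri, hge'⟩
    obtain ⟨t, ht⟩ := st_cluster D (fun i => δ ≤ |lam i k - c k|) hfreq
      (fun i => lam i k) (fun i => ⟨hlam0 i k, hlam01 i k⟩)
    have htx : x ⊓ ((2:ℝ) • e k) = t • e k := by
      refine st_cluster_limit E h hglb D (fun i => f i ⊓ ((2:ℝ) • e k)) _
        ?_ (fun i => lam i k) t (e k) (he0 k) ?_ ?_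
      · intro γ
        obtain ⟨j₀, hj₀⟩ := hdomx γ
        exact ⟨j₀, fun i hi => (abs_inf_sub_inf_le_abs _ _ _).trans (hj₀ i hi)⟩
      · intro i
        exact st_expand e he0 hdisj (lam i) (hlam0 i) (hlam01 i) _ (hlamS i) k
      · intro δ' hδ' j₀
        obtain ⟨i, ⟨hri, _⟩, hnear⟩ := st_cluster_near (ht j₀) hδ'
        exact ⟨i, hri, hnear⟩
    have hfar : δ ≤ |t - c k| := by
      have hsub : ((fun i => lam i k) '' {i | D.r i₀ i ∧ δ ≤ |lam i k - c k|})
          ⊆ {s : ℝ | δ ≤ |s - c k|} := by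
        rintro s ⟨i, ⟨_, hi⟩, rfl⟩; exact hi
      have hcl : IsClosed {s : ℝ | δ ≤ |s - c k|} :=
        isClosed_le continuous_const ((continuous_id.sub continuous_const).abs)
      exact closure_minimal hsub hcl (ht i₀)
    have heq : t • e k = c k • e k := by rw [← htx, hxk k]
    have : (t - c k) • e k = 0 := by rw [sub_smul, heq, sub_self]
    rcases smul_eq_zero.mp this with hh | hh
    · have : t = c k := sub_eq_zero.mp hh
      rw [this] at hfar
      simp at hfar
      linarith
    · exact hek0 k hh
  -- partial sums of c are at most 1
  have hc0 : ∀ k, 0 ≤ c k := fun k => (hc01 k).1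
  have hcsum_le : ∀ n : ℕ, ∑ k ∈ Finset.range n, c k ≤ 1 := by
    intro n
    refine le_of_forall_pos_le_add fun δ hδ => ?_
    set δ' := δ / (n + 1) with hδ'
    have hδ'pos : 0 < δ' := by rw [hδ']; positivity
    choose T hT using fun k => hconvk k δ' hδ'pos
    obtain ⟨j, hj⟩ := st_dir_combine D (Finset.range n) T
    have hnear : ∀ k ∈ Finset.range n, c k ≤ lam j k + δ' := by
      intro k hk
      have := hT k j (hj k hk j (D.refl j))
      have := abs_lt.mp this
      linarith [this.1]
    have h1 : ∑ k ∈ Finset.range n, c k ≤ ∑ k ∈ Finset.range n, (lam j k + δ') :=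
      Finset.sum_le_sum hnear
    have h2 : ∑ k ∈ Finset.range n, (lam j k + δ') =
        (∑ k ∈ Finset.range n, lam j k) + n * δ' := by
      rw [Finset.sum_add_distrib, Finset.sum_const, Finset.card_range, nsmul_eq_mul]
    have h3 : ∑ k ∈ Finset.range n, lam j k ≤ 1 :=
      sum_le_hasSum (Finset.range n) (fun k _ => hlam0 j k) (hlam1 j)
    have h4 : (n : ℝ) * δ' ≤ δ := by
      have hle : (n:ℝ) ≤ (n:ℝ) + 1 := by linarith
      calc (n : ℝ) * δ' ≤ ((n:ℝ) + 1) * δ' := mul_le_mul_of_nonneg_right hle hδ'pos.le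
      _ = δ := by rw [hδ']; field_simp
    linarith
  -- the candidate limit
  have hcs : Summable c := summable_of_sum_range_le hc0 hcsum_le
  have hσle : (∑' k, c k) ≤ 1 := Summable.tsum_le_of_sum_range_le hcs hcsum_le
  have hcse : Summable (fun k => c k • e k) :=
    st_summable_smul' e M hM c hc0 hcs
  set y := ∑' k, c k • e k with hy
  have hysum : HasSum (fun k => c k • e k) y := hcse.hasSum
  -- x is nonnegative
  have hx0 : 0 ≤ x := by
    have hlbx : -x ∈ lowerBounds (Set.range h) := by
      rintro z ⟨γ, rfl⟩
      obtain ⟨j₀, hj₀⟩ := hdomx γ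
      have h1 : -x ≤ f j₀ - x := by
        simpa using add_le_add_right (hf0 j₀) (-x)
      have h2 : f j₀ - x ≤ |f j₀ - x| := le_abs_self _
      exact h1.trans (h2.trans (hj₀ j₀ (D.refl j₀)))
    have := hglb.2 hlbx
    simpa using neg_nonpos.mp this
  -- x dominates partial sums of the candidate
  have hcke_le : ∀ k, c k • e k ≤ x := by
    intro k
    rw [← hxk k]
    exact inf_le_left
  have hxge : ∀ n : ℕ, ∑ k ∈ Finset.range n, c k • e k ≤ x := by
    intro n
    induction n with
    | zero => simpa using hx0
    | succ m ih =>
        rw [Finset.sum_range_succ]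
        have hdisjsum : (∑ k ∈ Finset.range m, c k • e k) ⊓ (c m • e m) = 0 :=
          st_FS_disj e he0 hdisj (Finset.range m) c hc0 m
            (by simp) (c m) (hc0 m)
        have hsupeq : (∑ k ∈ Finset.range m, c k • e k) ⊔ (c m • e m)
            = ∑ k ∈ Finset.range m, c k • e k + c m • e m := by
          have := inf_add_sup (∑ k ∈ Finset.range m, c k • e k) (c m • e m)
          rw [hdisjsum, zero_add] at this
          exact this
        rw [← hsupeq]
        exact sup_le ih (hcke_le m)
  have hyx : y ≤ x := le_of_tendsto hysum.tendsto_sum_nat (.of_forall hxge)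
  set r := x - y with hr
  have hr0 : 0 ≤ r := by rw [hr]; simpa using hyx
  have hy0 : 0 ≤ y := st_IS_nonneg e c hc0 y hysum he0
  -- r is disjoint from every e k
  have hrek : ∀ k, r ⊓ e k = 0 := by
    intro k
    have hxck : x ⊓ ((c k + 1) • e k) = c k • e k := by
      refine le_antisymm ?_ (le_inf (hcke_le k) (st_smul_mono (by linarith) (he0 k)))
      calc x ⊓ ((c k + 1) • e k) ≤ x ⊓ ((2:ℝ) • e k) :=
            inf_le_inf_left x (st_smul_mono (by linarith [(hc01 k).2]) (he0 k))
      _ = c k • e k := hxk k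
    have hkey : (x - c k • e k) ⊓ e k = 0 := by
      have hid : (x - c k • e k) ⊓ ((c k • e k + e k) - c k • e k)
          = x ⊓ (c k • e k + e k) - c k • e k := (inf_sub _ _ _).symm
      have hsum : c k • e k + e k = (c k + 1) • e k := by
        rw [add_smul, one_smul]
      have : (c k • e k + e k) - c k • e k = e k := by abel
      rw [this] at hid
      rw [hid, hsum, hxck, sub_self]
    have hrle : r ≤ x - c k • e k := by
      rw [hr]
      have hky : c k • e k ≤ y := le_hasSum hysum k fun j _ =>
        st_smul_nonneg (hc0 j) (he0 j)
      exact sub_le_sub_left hky x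
    refine le_antisymm ?_ (le_inf hr0 (he0 k))
    calc r ⊓ e k ≤ (x - c k • e k) ⊓ e k := inf_le_inf_right _ hrle
    _ = 0 := hkey
  -- r vanishes
  have hrS : ∀ (F : Finset ℕ) (a : ℕ → ℝ), (∀ k, 0 ≤ a k) →
      (∑ k ∈ F, a k • e k) ⊓ r = 0 := by
    intro F a ha
    induction F using Finset.induction with
    | empty => simpa using inf_eq_left.mpr hr0
    | @insert i F hiF ih =>
        rw [Finset.sum_insert hiF]
        refine st_disj_add _ _ _ (st_smul_nonneg (ha i) (he0 i))
          (st_FS_nonneg e he0 F a ha) hr0 ?_ ih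
        exact st_disj_smul _ _ (he0 i) hr0 (by rw [inf_comm]; exact hrek i) (ha i)
  have hrh : ∀ γ, r ≤ h γ := by
    intro γ
    obtain ⟨j₀, hj₀⟩ := hdomx γ
    have hxle : x ≤ f j₀ + h γ := by
      have h1 : x - f j₀ ≤ |f j₀ - x| := by
        have : x - f j₀ = -(f j₀ - x) := by abel
        rw [this]
        exact neg_le_abs _
      have h2 := h1.trans (hj₀ j₀ (D.refl j₀))
      rw [add_comm]
      exact sub_le_iff_le_add.mp h2
    have hrstep : ∀ n : ℕ,
        r ≤ (f j₀ - ∑ k ∈ Finset.range n, lam j₀ k • e k) + h γ := by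
      intro n
      set S := ∑ k ∈ Finset.range n, lam j₀ k • e k with hS
      have hS0 : 0 ≤ S := st_FS_nonneg e he0 _ _ (hlam0 j₀)
      have hT0 : 0 ≤ f j₀ - S := by
        have := sum_le_hasSum (Finset.range n)
          (fun k _ => st_smul_nonneg (hlam0 j₀ k) (he0 k)) (hlamS j₀)
        exact sub_nonneg.mpr this
      have hrx : r ≤ x := by
        rw [hr]; exact sub_le_self x hy0
      have h1 : r = r ⊓ x := (inf_eq_left.mpr hrx).symm
      have h2 : r ⊓ x ≤ r ⊓ (f j₀ + h γ) := inf_le_inf_left r hxle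
      have h3 : r ⊓ (f j₀ + h γ) ≤ r ⊓ f j₀ + r ⊓ h γ := by
        rw [inf_comm r _, inf_comm r _, inf_comm r _]
        exact st_inf_add_le _ _ _ (hf0 j₀) (hh0 γ) hr0
      have h4 : r ⊓ f j₀ ≤ f j₀ - S := by
        have hsplit : f j₀ = S + (f j₀ - S) := by abel
        have h5 : r ⊓ f j₀ ≤ r ⊓ S + r ⊓ (f j₀ - S) := by
          have hkey := st_inf_add_le S (f j₀ - S) r hS0 hT0 hr0
          rw [← hsplit] at hkey
          rw [inf_comm r (f j₀), inf_comm r S, inf_comm r (f j₀ - S)]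
          exact hkey
        have h6 : r ⊓ S = 0 := by
          rw [inf_comm]
          exact hrS (Finset.range n) (lam j₀) (hlam0 j₀)
        rw [h6, zero_add] at h5
        exact h5.trans inf_le_right
      have h7 : r ⊓ h γ ≤ h γ := inf_le_right
      have := h1.le.trans (h2.trans (h3.trans (add_le_add h4 h7)))
      exact this
    have htendT : Tendsto
        (fun n => (f j₀ - ∑ k ∈ Finset.range n, lam j₀ k • e k) + h γ)
        atTop (𝓝 (h γ)) := by
      have h1 := (hlamS j₀).tendsto_sum_nat
      have h2 : Tendsto (fun n => f j₀ - ∑ k ∈ Finset.range n, lam j₀ k • e k)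
          atTop (𝓝 0) := by
        have := (tendsto_const_nhds (x := f j₀) (f := atTop (α := ℕ))).sub h1
        simpa using this
      have := h2.add_const (h γ)
      simpa using this
    have hclosed : IsClosed {v : X | r ≤ v} :=
      isClosed_le continuous_const continuous_id
    exact hclosed.mem_of_tendsto htendT (.of_forall hrstep)
  have hrzero : r = 0 := by
    have hlb : r ∈ lowerBounds (Set.range h) := by rintro z ⟨γ, rfl⟩; exact hrh γ
    exact le_antisymm (hglb.2 hlb) hr0
  have hxy : x = y := sub_eq_zero.mp hrzero
  -- total mass is 1
  have hσ : (∑' k, c k) = 1 := by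
    by_contra hσne
    have hσlt : (∑' k, c k) < 1 := lt_of_le_of_ne hσle hσne
    set δ := 1 - ∑' k, c k with hδdef
    have hδpos : 0 < δ := by rw [hδdef]; linarith
    refine st_noescape e he0 hdisj M hM g ε hε hge D
      (fun i => (f i - x)⁺) (fun i k => (lam i k - c k)⁺)
      (fun i k => posPart_nonneg _) ?_ ?_ δ hδpos ?_ E h hglb ?_
    · intro i
      refine Summable.of_nonneg_of_le (fun k => posPart_nonneg _) (fun k => ?_)
        (hlam1 i).summable
      show (lam i k - c k)⁺ ≤ lam i k
      rw [posPart_def]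
      exact sup_le (by linarith [hc0 k]) (hlam0 i k)
    · intro i
      have hsa : Summable (fun k => |lam i k - c k|) := by
        refine Summable.of_nonneg_of_le (fun k => abs_nonneg _) (fun k => ?_)
          ((hlam1 i).summable.add hcs)
        exact (abs_sub _ _).trans (by
          rw [abs_of_nonneg (hlam0 i k), abs_of_nonneg (hc0 k)])
      have hu : HasSum (fun k => (lam i k - c k) • e k) (f i - x) := by
        have := (hlamS i).sub (hxy ▸ hysum)
        refine this.congr_fun fun k => ?_
        rw [sub_smul]
      exact st_IS_posPart e he0 hdisj M hM _ hsa _ hu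
    · intro i
      have hs1 : Summable (fun k => (lam i k - c k)) := (hlam1 i).summable.sub hcs
      have hs2 : Summable (fun k => (lam i k - c k)⁺) := by
        refine Summable.of_nonneg_of_le (fun k => posPart_nonneg _) (fun k => ?_)
          (hlam1 i).summable
        rw [posPart_def]
        exact sup_le (by linarith [hc0 k]) (hlam0 i k)
      have h1 : ∑' k, (lam i k - c k) ≤ ∑' k, (lam i k - c k)⁺ :=
        Summable.tsum_le_tsum (fun k => le_posPart _) hs1 hs2
      have h2 : ∑' k, (lam i k - c k) = 1 - ∑' k, c k :=
        ((hlam1 i).sub hcs.hasSum).tsum_eq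
      rw [hδdef]
      linarith [h1, h2.symm.le]
    · intro γ
      obtain ⟨j₀, hj₀⟩ := hdomx γ
      refine ⟨j₀, fun i hi => ?_⟩
      have h1 : (f i - x)⁺ ≤ |f i - x| := by
        rw [posPart_def]
        exact sup_le (le_abs_self _) (abs_nonneg _)
      exact h1.trans (hj₀ i hi)
  exact ⟨c, hc0, by rw [← hσ]; exact hcs.hasSum, hxy ▸ hysum⟩

end Lat7

variable {X}
/-- property `P4` implies the disjoint order continuity property. -/
theorem stmt16 {X : Type*} [NormedAddCommGroup X] [Lattice X] [HasSolidNorm X] [IsOrderedAddMonoid X] [NormedSpace ℝ X] [CompleteSpace X]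
    (hP4 : PropP4 X) : DOCP X := by
  classical
  intro f hf0 hfM hfdisj hσnull
  obtain ⟨M, hM⟩ := hfM
  have hM0 : 0 ≤ M := (norm_nonneg (f 0)).trans (hM 0)
  intro g0
  by_contra hng
  -- extract ε and a frequent set where |g0 (f n)| is large
  rw [Metric.tendsto_atTop] at hng
  push_neg at hng
  obtain ⟨ε, hε, hfreq0⟩ := hng
  have hfreq1 : ∃ᶠ n in atTop, ε ≤ |g0 (f n)| := by
    rw [Filter.frequently_atTop]
    intro N
    obtain ⟨n, hnN, hdist⟩ := hfreq0 N
    refine ⟨n, hnN, ?_⟩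
    rwa [Real.dist_eq, sub_zero] at hdist
  -- fix the sign
  have hfreq2 : (∃ᶠ n in atTop, ε ≤ g0 (f n)) ∨ (∃ᶠ n in atTop, ε ≤ (-g0) (f n)) := by
    rw [← Filter.frequently_or_distrib]
    refine hfreq1.mono fun n hn => ?_
    rcases le_abs.mp hn with hp | hp
    · exact Or.inl hp
    · right
      simpa using hp
  have hmain : ∀ g : X →L[ℝ] ℝ, (∃ᶠ n in atTop, ε ≤ g (f n)) → False := by
    intro g hfr
    obtain ⟨φ, hφmono, hφ⟩ := Filter.extraction_of_frequently_atTop hfr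
    set e : ℕ → X := fun k => f (φ k) with he
    have he0 : ∀ k, 0 ≤ e k := fun k => hf0 (φ k)
    have hdisj : ∀ k l, k ≠ l → e k ⊓ e l = 0 := fun k l hkl =>
      hfdisj (φ k) (φ l) (fun hh => hkl (hφmono.injective hh))
    have hM' : ∀ k, ‖e k‖ ≤ M := fun k => hM (φ k)
    have hge : ∀ k, ε ≤ g (e k) := fun k => hφ k
    -- the candidate set
    have hconv : Convex ℝ (stK e) := by
      rintro x ⟨lx, hlx0, hlx1, hlxS⟩ y ⟨ly, hly0, hly1, hlyS⟩ a b ha hb hab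
      refine ⟨fun k => a * lx k + b * ly k, ?_, ?_, ?_⟩
      · intro k
        have := mul_nonneg ha (hlx0 k)
        have := mul_nonneg hb (hly0 k)
        positivity
      · have := (hlx1.mul_left a).add (hly1.mul_left b)
        simpa [hab] using this
      · have h1 : HasSum (fun k => a • (lx k • e k)) (a • x) := hlxS.const_smul a
        have h2 : HasSum (fun k => b • (ly k • e k)) (b • y) := hlyS.const_smul b
        have := h1.add h2
        refine this.congr_fun fun k => ?_
        rw [add_smul, mul_smul, mul_smul]
    have hbdd : ∃ M', ∀ x ∈ stK e, ‖x‖ ≤ M' := by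
      refine ⟨M, ?_⟩
      rintro x ⟨lx, hlx0, hlx1, hlxS⟩
      have hnorm : ∀ k, ‖lx k • e k‖ ≤ M * lx k := by
        intro k
        rw [norm_smul, Real.norm_eq_abs, abs_of_nonneg (hlx0 k), mul_comm M (lx k)]
        exact mul_le_mul_of_nonneg_left (hM' k) (hlx0 k)
      have hsn : Summable (fun k => ‖lx k • e k‖) :=
        Summable.of_nonneg_of_le (fun k => norm_nonneg _) hnorm
          (hlx1.summable.mul_left M)
      have h1 : ‖x‖ ≤ ∑' k, ‖lx k • e k‖ := by
        rw [← hlxS.tsum_eq]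
        exact norm_tsum_le_tsum_norm hsn
      have h2 : ∑' k, ‖lx k • e k‖ ≤ ∑' k, M * lx k :=
        Summable.tsum_le_tsum hnorm hsn (hlx1.summable.mul_left M)
      have h3 : ∑' k, M * lx k = M := by
        rw [(hlx1.mul_left M).tsum_eq, mul_one]
      linarith
    have hoc : IsOrderClosed (stK e) :=
      st_K_orderClosed e he0 hdisj M hM' g ε hε hge
    have hseq : IsAbsSigmaSeqClosed (stK e) := hP4 (stK e) hconv hbdd hoc
    -- 0 is in the |σ|-sequential closure
    have hmem : (0 : X) ∈ AbsSigmaSeqClosure (stK e) := by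
      refine ⟨fun n => e n, fun n => ?_, fun g' hg' => ?_⟩
      · refine ⟨fun j => if j = n then 1 else 0, ?_, hasSum_ite_eq n 1, ?_⟩
        · intro j; by_cases hj : j = n <;> simp [hj]
        · have := hasSum_ite_eq n (e n)
          refine this.congr_fun fun j => ?_
          by_cases hj : j = n
          · subst hj; simp
          · simp [hj]
      · have hfull := hσnull g' hg'
        have hcomp := hfull.comp hφmono.tendsto_atTop
        refine hcomp.congr fun k => ?_
        rw [sub_zero, abs_of_nonneg (he0 k)]
        rfl
    have h0K : (0 : X) ∈ stK e := hseq hmem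
    obtain ⟨lx, hlx0, hlx1, hlxS⟩ := h0K
    have hmap : HasSum (fun k => lx k * g (e k)) 0 := by
      have := hlxS.mapL g
      rw [map_zero] at this
      refine this.congr_fun fun k => ?_
      simp [smul_eq_mul]
    have h1 : HasSum (fun k => ε * lx k) ε := by
      have := hlx1.mul_left ε
      simpa using this
    have h2 : ε ≤ 0 := by
      have := Summable.tsum_le_tsum (f := fun k => ε * lx k) (g := fun k => lx k * g (e k))
        (fun k => by
          show ε * lx k ≤ lx k * g (e k)
          rw [mul_comm]
          exact mul_le_mul_of_nonneg_left (hge k) (hlx0 k))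
        h1.summable hmap.summable
      rwa [h1.tsum_eq, hmap.tsum_eq] at this
    linarith
  rcases hfreq2 with hp | hp
  · exact hmain g0 hp
  · exact hmain (-g0) hp
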